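/- Let f be a threshold function on E_kⁿ, K(f) = cone(M₁(f) − M₀(f)), F₀(f) = conv M₀(f) − K(f), F₁(f) = conv M₁(f) + K(f). If x and y are two distinct essential points of f lying both in M₀(f) or both in M₁(f) (i.e., distinct vertices of the same F_ν(f)), then 2x − y ∉ F₀(f) ∪ F₁(f). -/

import Mathlib

/-- `E_kⁿ` viewed as a subset of `ℝⁿ`. -/
def cubePts (n k : ℕ) : Set (Fin n → ℝ) := {x | ∀ j, ∃ m : ℕ, m < k ∧ x j = (m : ℝ)}

/-- The cone hull of a set `X` (the set of nonnegative combinations of elements of `X`,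
realized as nonnegative multiples of points of the convex hull). -/
def coneHull {n : ℕ} (X : Set (Fin n → ℝ)) : Set (Fin n → ℝ) :=
  {z | ∃ c : ℝ, 0 ≤ c ∧ ∃ y ∈ convexHull ℝ X, z = c • y}

/-- `M₀(f)` for the threshold function determined by `aᵀx ≤ a₀`. -/
def Mzero (n k : ℕ) (a : Fin n → ℝ) (a₀ : ℝ) : Set (Fin n → ℝ) :=
  {x ∈ cubePts n k | ∑ j, a j * x j ≤ a₀}

/-- `M₁(f)`. -/
def Mone (n k : ℕ) (a : Fin n → ℝ) (a₀ : ℝ) : Set (Fin n → ℝ) :=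
  cubePts n k \ Mzero n k a a₀

/-- `K(f) = cone(M₁(f) − M₀(f))`. -/
def Kcone (n k : ℕ) (a : Fin n → ℝ) (a₀ : ℝ) : Set (Fin n → ℝ) :=
  coneHull {z | ∃ u ∈ Mone n k a a₀, ∃ w ∈ Mzero n k a a₀, z = u - w}

/-- `F₀(f) = conv M₀(f) − K(f)`. -/
def Fzero (n k : ℕ) (a : Fin n → ℝ) (a₀ : ℝ) : Set (Fin n → ℝ) :=
  {z | ∃ u ∈ convexHull ℝ (Mzero n k a a₀), ∃ w ∈ Kcone n k a a₀, z = u - w}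

/-- `F₁(f) = conv M₁(f) + K(f)`. -/
def Fone (n k : ℕ) (a : Fin n → ℝ) (a₀ : ℝ) : Set (Fin n → ℝ) :=
  {z | ∃ u ∈ convexHull ℝ (Mone n k a a₀), ∃ w ∈ Kcone n k a a₀, z = u + w}

section Aux

open Pointwise

/-- A cone hull is closed under addition. -/

theorem coneHull_add_mem' {n : ℕ} {X : Set (Fin n → ℝ)} {p q : Fin n → ℝ}
    (hp : p ∈ coneHull X) (hq : q ∈ coneHull X) : p + q ∈ coneHull X := by
  obtain ⟨c, hc, y₁, hy₁, rfl⟩ := hp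
  obtain ⟨d, hd, y₂, hy₂, rfl⟩ := hq
  rcases eq_or_lt_of_le (add_nonneg hc hd) with h | h
  · have hc0 : c = 0 := by linarith [(add_eq_zero_iff_of_nonneg hc hd).mp h.symm]
    have hd0 : d = 0 := by linarith [(add_eq_zero_iff_of_nonneg hc hd).mp h.symm]
    exact ⟨0, le_refl 0, y₁, hy₁, by simp [hc0, hd0]⟩
  · refine ⟨c + d, le_of_lt h, (c / (c + d)) • y₁ + (d / (c + d)) • y₂, ?_, ?_⟩
    · exact (convex_convexHull ℝ X) hy₁ hy₂ (div_nonneg hc h.le) (div_nonneg hd h.le)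
        (by field_simp)
    · rw [smul_add, smul_smul, smul_smul]
      rw [mul_div_cancel₀ _ (ne_of_gt h), mul_div_cancel₀ _ (ne_of_gt h)]

/-- Differences of points of the hulls of `M₁` and `M₀` lie in `K`. -/
theorem diff_mem_Kcone {n k : ℕ} {a : Fin n → ℝ} {a₀ : ℝ} {u w : Fin n → ℝ}
    (hu : u ∈ convexHull ℝ (Mone n k a a₀)) (hw : w ∈ convexHull ℝ (Mzero n k a a₀)) :
    u - w ∈ Kcone n k a a₀ := by
  have hset : {z | ∃ u ∈ Mone n k a a₀, ∃ w ∈ Mzero n k a a₀, z = u - w}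
      = Mone n k a a₀ - Mzero n k a a₀ := by
    ext z
    simp only [Set.mem_setOf_eq, Set.mem_sub]
    constructor
    · rintro ⟨u, hu, w, hw, rfl⟩; exact ⟨u, hu, w, hw, rfl⟩
    · rintro ⟨u, hu, w, hw, rfl⟩; exact ⟨u, hu, w, hw, rfl⟩
  refine ⟨1, zero_le_one, u - w, ?_, (one_smul ℝ _).symm⟩
  rw [hset, convexHull_sub]
  exact Set.sub_mem_sub hu hw

theorem Fzero_sub_K {n k : ℕ} {a : Fin n → ℝ} {a₀ : ℝ} {z w : Fin n → ℝ}
    (hz : z ∈ Fzero n k a a₀) (hw : w ∈ Kcone n k a a₀) : z - w ∈ Fzero n k a a₀ := by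
  obtain ⟨u, hu, v, hv, rfl⟩ := hz
  exact ⟨u, hu, v + w, coneHull_add_mem' hv hw, by abel⟩

theorem Fone_add_K {n k : ℕ} {a : Fin n → ℝ} {a₀ : ℝ} {z w : Fin n → ℝ}
    (hz : z ∈ Fone n k a a₀) (hw : w ∈ Kcone n k a a₀) : z + w ∈ Fone n k a a₀ := by
  obtain ⟨u, hu, v, hv, rfl⟩ := hz
  exact ⟨u, hu, v + w, coneHull_add_mem' hv hw, by abel⟩

theorem Fone_sub_Fzero {n k : ℕ} {a : Fin n → ℝ} {a₀ : ℝ} {z₁ z₀ : Fin n → ℝ}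
    (h₁ : z₁ ∈ Fone n k a a₀) (h₀ : z₀ ∈ Fzero n k a a₀) : z₁ - z₀ ∈ Kcone n k a a₀ := by
  obtain ⟨u₁, hu₁, w₁, hw₁, rfl⟩ := h₁
  obtain ⟨u₀, hu₀, w₀, hw₀, rfl⟩ := h₀
  have : u₁ + w₁ - (u₀ - w₀) = (u₁ - u₀) + (w₁ + w₀) := by abel
  rw [this]
  exact coneHull_add_mem' (diff_mem_Kcone hu₁ hu₀) (coneHull_add_mem' hw₁ hw₀)

theorem mid_openSegment {n : ℕ} (p q : Fin n → ℝ) :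
    (1/2 : ℝ) • p + (1/2 : ℝ) • q ∈ openSegment ℝ p q :=
  ⟨1/2, 1/2, by norm_num, by norm_num, by norm_num, rfl⟩

end Aux

/-- If `x ≠ y` are vertices of the same `F_ν(f)` (equivalently, distinct essential points
of `f` lying in the same `M_ν(f)`), then `2x − y ∉ F₀(f) ∪ F₁(f)`. -/
theorem reflection_outside_F (n k : ℕ) (hk : 2 ≤ k) (a : Fin n → ℝ) (a₀ : ℝ)
    (x y : Fin n → ℝ) (hxy : x ≠ y)
    (hvert : (x ∈ Set.extremePoints ℝ (Fzero n k a a₀) ∧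
              y ∈ Set.extremePoints ℝ (Fzero n k a a₀)) ∨
             (x ∈ Set.extremePoints ℝ (Fone n k a a₀) ∧
              y ∈ Set.extremePoints ℝ (Fone n k a a₀))) :
    (2 : ℝ) • x - y ∉ Fzero n k a a₀ ∪ Fone n k a a₀ := by
  set z := (2 : ℝ) • x - y with hz
  have hxmid : x = (1/2 : ℝ) • y + (1/2 : ℝ) • z := by rw [hz]; module
  intro hmem
  rcases hvert with ⟨hx, hy⟩ | ⟨hx, hy⟩
  · rcases hmem with hz0 | hz1
    · -- x is the midpoint of y and z, all in F₀
      have := (hx.2 hy.1 hz0 (hxmid ▸ mid_openSegment y z))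
      exact hxy this.symm
    · -- z ∈ F₁, x ∈ F₀, so x − y = z − x ∈ K; then y is midpoint of x and 2y−x in F₀
      have hk : x - y ∈ Kcone n k a a₀ := by
        have := Fone_sub_Fzero hz1 hx.1
        have he : z - x = x - y := by rw [hz]; module
        rwa [he] at this
      have hq : y - (x - y) ∈ Fzero n k a a₀ := Fzero_sub_K hy.1 hk
      have hseg : y ∈ openSegment ℝ x (y - (x - y)) :=
        ⟨1/2, 1/2, by norm_num, by norm_num, by norm_num, by module⟩
      have := (hy.2 hx.1 hq hseg)
      exact hxy this
  · rcases hmem with hz0 | hz1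
    · -- z ∈ F₀, x ∈ F₁, so y − x = x − z ∈ K; then y is midpoint of x and 2y−x in F₁
      have hk : y - x ∈ Kcone n k a a₀ := by
        have := Fone_sub_Fzero hx.1 hz0
        have he : x - z = y - x := by rw [hz]; module
        rwa [he] at this
      have hq : y + (y - x) ∈ Fone n k a a₀ := Fone_add_K hy.1 hk
      have hseg : y ∈ openSegment ℝ x (y + (y - x)) :=
        ⟨1/2, 1/2, by norm_num, by norm_num, by norm_num, by module⟩
      have := (hy.2 hx.1 hq hseg)
      exact hxy this
    · have := (hx.2 hy.1 hz1 (hxmid ▸ mid_openSegment y z))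
      exact hxy this.symm
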